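/- For a piecewise-constant symmetric density with bins aligned to a grid of width Δ and sensitivity s a positive integer multiple of Δ, the maximum over t ∈ [-s,s] of the Rényi divergence D_α(f ∥ T_t f) (α > 1) is attained at some t in the finite set {Δ, 2Δ, …, s} of positive integer multiples of Δ. -/

import Mathlib

open MeasureTheory Set
open scoped ENNReal

noncomputable section AuxWCS
namespace AuxWCS

variable {Δ α : ℝ} {p : ℕ → ℝ} {f : ℝ → ℝ}

/-- grid endpoints -/
def badSet (Δ : ℝ) : Set ℝ := ⋃ i : ℤ, {((i : ℝ) + 1/2) * Δ}

lemma null_badSet (Δ : ℝ) : volume (badSet Δ) = 0 :=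
  measure_iUnion_null fun _ => measure_singleton _

lemma ae_not_badSet (Δ : ℝ) : ∀ᵐ z : ℝ, z ∉ badSet Δ := by
  rw [ae_iff]; simpa using null_badSet Δ

lemma mem_bin (hΔ : 0 < Δ) {z : ℝ} (hz : z ∉ badSet Δ) :
    ∃ i : ℤ, z ∈ Set.Ioo (((i : ℝ) - 1/2) * Δ) (((i : ℝ) + 1/2) * Δ) := by
  refine ⟨⌊z / Δ + 1/2⌋, ?_, ?_⟩
  · rcases lt_or_eq_of_le (Int.floor_le (z / Δ + 1/2)) with h | h
    · have : (⌊z / Δ + 1/2⌋ : ℝ) - 1/2 < z / Δ := by linarith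
      calc ((⌊z / Δ + 1/2⌋ : ℝ) - 1/2) * Δ < z / Δ * Δ := by
            exact mul_lt_mul_of_pos_right this hΔ
        _ = z := by field_simp
    · exfalso; apply hz
      refine Set.mem_iUnion.2 ⟨⌊z / Δ + 1/2⌋ - 1, Set.mem_singleton_iff.2 ?_⟩
      push_cast
      rw [h]
      have hΔ' : Δ ≠ 0 := ne_of_gt hΔ
      field_simp
      ring
  · have h := Int.lt_floor_add_one (z / Δ + 1/2)
    have : z / Δ < (⌊z / Δ + 1/2⌋ : ℝ) + 1/2 := by linarith
    calc z = z / Δ * Δ := by field_simp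
      _ < ((⌊z / Δ + 1/2⌋ : ℝ) + 1/2) * Δ := mul_lt_mul_of_pos_right this hΔ

lemma f_pos (hΔ : 0 < Δ) (hp : ∀ j, 0 < p j)
    (hf : ∀ (i : ℤ) (z : ℝ), z ∈ Set.Ioo (((i : ℝ) - 1 / 2) * Δ) (((i : ℝ) + 1 / 2) * Δ) →
      f z = p i.natAbs / Δ)
    {z : ℝ} (hz : z ∉ badSet Δ) : 0 < f z := by
  obtain ⟨i, hi⟩ := mem_bin hΔ hz
  rw [hf i z (by simpa using hi)]
  exact div_pos (hp _) hΔ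


lemma ae_not_badSet_shift (Δ t : ℝ) : ∀ᵐ z : ℝ, z - t ∉ badSet Δ := by
  rw [ae_iff]
  refine measure_mono_null (fun z hz => ?_)
    (measure_iUnion_null (s := fun i : ℤ => {((i : ℝ) + 1/2) * Δ + t}) fun _ => measure_singleton _)
  simp only [Set.mem_setOf_eq, not_not, badSet, Set.mem_iUnion, Set.mem_singleton_iff] at hz ⊢
  obtain ⟨i, hi⟩ := hz
  exact ⟨i, by linarith⟩


def S (Δ α : ℝ) (p : ℕ → ℝ) (m : ℤ) : ℝ≥0∞ :=
  ∑' i : ℤ, ENNReal.ofReal ((p i.natAbs / Δ) ^ α * (p (i - m).natAbs / Δ) ^ (1 - α))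

def L (f : ℝ → ℝ) (α t : ℝ) : ℝ≥0∞ :=
  ∫⁻ z : ℝ, ENNReal.ofReal (f z ^ α * f (z - t) ^ (1 - α))

lemma shift_lintegral (hΔ : 0 < Δ)
    (hf : ∀ (i : ℤ) (z : ℝ), z ∈ Set.Ioo (((i : ℝ) - 1 / 2) * Δ) (((i : ℝ) + 1 / 2) * Δ) →
      f z = p i.natAbs / Δ)
    (m : ℤ) {u : ℝ} (hu : 0 ≤ u) (huΔ : u ≤ Δ) :
    L f α ((m : ℝ) * Δ + u) =
      S Δ α p (m + 1) * ENNReal.ofReal u + S Δ α p m * ENNReal.ofReal (Δ - u) := by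
  set t := (m : ℝ) * Δ + u with ht
  set g : ℝ → ℝ≥0∞ := fun z => ENNReal.ofReal (f z ^ α * f (z - t) ^ (1 - α)) with hg
  set a : ℤ → ℝ := fun i => ((i : ℝ) - 1/2) * Δ with ha
  have hstep : ∀ i : ℤ, a (i + 1) = a i + Δ := by
    intro i; simp only [ha]; push_cast; ring
  have hcover : (⋃ i : ℤ, Ioc (a i) (a (i + 1))) = univ := by
    ext z
    simp only [mem_iUnion, mem_univ, iff_true, mem_Ioc]
    refine ⟨⌈z / Δ + 1/2⌉ - 1, ?_, ?_⟩
    · have h1 : ((⌈z / Δ + 1/2⌉ : ℝ) - 1) < z / Δ + 1/2 := by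
        have := Int.ceil_lt_add_one (z / Δ + 1/2); linarith
      have h2 : ((⌈z / Δ + 1/2⌉ - 1 : ℤ) : ℝ) - 1/2 < z / Δ := by push_cast; linarith
      calc a (⌈z / Δ + 1/2⌉ - 1) = (((⌈z / Δ + 1/2⌉ - 1 : ℤ) : ℝ) - 1/2) * Δ := rfl
        _ < z / Δ * Δ := mul_lt_mul_of_pos_right h2 hΔ
        _ = z := by field_simp
    · rw [hstep]
      have h1 : z / Δ + 1/2 ≤ (⌈z / Δ + 1/2⌉ : ℝ) := Int.le_ceil _
      have h2 : z / Δ ≤ ((⌈z / Δ + 1/2⌉ - 1 : ℤ) : ℝ) + 1/2 := by push_cast; linarith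
      have : z ≤ (((⌈z / Δ + 1/2⌉ - 1 : ℤ) : ℝ) + 1/2) * Δ := by
        calc z = z / Δ * Δ := by field_simp
          _ ≤ (((⌈z / Δ + 1/2⌉ - 1 : ℤ) : ℝ) + 1/2) * Δ := mul_le_mul_of_nonneg_right h2 hΔ.le
      calc z ≤ (((⌈z / Δ + 1/2⌉ - 1 : ℤ) : ℝ) + 1/2) * Δ := this
        _ = a (⌈z / Δ + 1/2⌉ - 1) + Δ := by simp only [ha]; ring
  have hmono : ∀ {i j : ℤ}, i ≤ j → a i ≤ a j := by
    intro i j hij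
    have : (i : ℝ) ≤ (j : ℝ) := by exact_mod_cast hij
    exact mul_le_mul_of_nonneg_right (by linarith) hΔ.le
  have hdisj : Pairwise (Function.onFun Disjoint fun i : ℤ => Ioc (a i) (a (i + 1))) := by
    intro i j hij
    rcases lt_or_gt_of_ne hij with h | h
    · refine Set.Ioc_disjoint_Ioc.2 ?_
      have : a (i + 1) ≤ a j := hmono (by omega)
      exact le_trans (min_le_left _ _) (le_trans this (le_max_right _ _))
    · refine Set.Ioc_disjoint_Ioc.2 ?_
      have : a (j + 1) ≤ a i := hmono (by omega)
      exact le_trans (min_le_right _ _) (le_trans this (le_max_left _ _))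
  have key : ∀ i : ℤ, ∫⁻ z in Ioc (a i) (a (i + 1)), g z
      = ENNReal.ofReal ((p i.natAbs / Δ) ^ α * (p (i - (m+1)).natAbs / Δ) ^ (1 - α)) * ENNReal.ofReal u
      + ENNReal.ofReal ((p i.natAbs / Δ) ^ α * (p (i - m).natAbs / Δ) ^ (1 - α)) * ENNReal.ofReal (Δ - u) := by
    intro i
    have hai : a i = ((i : ℝ) - 1/2) * Δ := rfl
    have hAC : a i ≤ a i + u := by linarith
    have hCB : a i + u ≤ a (i + 1) := by rw [hstep]; linarith
    rw [← Set.Ioc_union_Ioc_eq_Ioc hAC hCB,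
      lintegral_union measurableSet_Ioc
        (Set.Ioc_disjoint_Ioc.2 (le_trans (min_le_left _ _) (le_max_right _ _)))]
    have hres1 : volume.restrict (Ioc (a i) (a i + u)) = volume.restrict (Ioo (a i) (a i + u)) :=
      (Measure.restrict_congr_set MeasureTheory.Ioo_ae_eq_Ioc).symm
    have hres2 : volume.restrict (Ioc (a i + u) (a (i + 1))) = volume.restrict (Ioo (a i + u) (a (i + 1))) :=
      (Measure.restrict_congr_set MeasureTheory.Ioo_ae_eq_Ioc).symm
    have hpiece1 : ∫⁻ z in Ioc (a i) (a i + u), g z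
        = ENNReal.ofReal ((p i.natAbs / Δ) ^ α * (p (i - (m+1)).natAbs / Δ) ^ (1 - α)) * ENNReal.ofReal u := by
      rw [hres1]
      rw [setLIntegral_congr_fun measurableSet_Ioo
        (fun z hz => ?_), setLIntegral_const]
      · rw [Real.volume_Ioo]; congr 1; ring
      · -- pointwise: z ∈ Ioo (a i) (a i + u)
        obtain ⟨hz1, hz2⟩ := hz
        have hfz : f z = p i.natAbs / Δ := by
          apply hf i
          constructor
          · exact hz1
          · have : a i + u ≤ ((i : ℝ) + 1/2) * Δ := by simp only [ha]; nlinarith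
            exact lt_of_lt_of_le hz2 this
        have hfzt : f (z - t) = p (i - (m+1)).natAbs / Δ := by
          apply hf (i - (m+1))
          constructor
          · push_cast; simp only [ha] at hz1; nlinarith
          · push_cast; simp only [ha] at hz2; nlinarith
        simp only [hg, hfz, hfzt]
    have hpiece2 : ∫⁻ z in Ioc (a i + u) (a (i + 1)), g z
        = ENNReal.ofReal ((p i.natAbs / Δ) ^ α * (p (i - m).natAbs / Δ) ^ (1 - α)) * ENNReal.ofReal (Δ - u) := by
      rw [hres2]
      rw [setLIntegral_congr_fun measurableSet_Ioo
        (fun z hz => ?_), setLIntegral_const]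
      · rw [Real.volume_Ioo, hstep]; congr 1; ring
      · obtain ⟨hz1, hz2⟩ := hz
        rw [hstep] at hz2
        have hfz : f z = p i.natAbs / Δ := by
          apply hf i
          constructor
          · exact lt_of_le_of_lt (by rw [hai]; linarith) hz1
          · have : a i + Δ = ((i : ℝ) + 1/2) * Δ := by simp only [ha]; ring
            rw [← this]; exact hz2
        have hfzt : f (z - t) = p (i - m).natAbs / Δ := by
          apply hf (i - m)
          constructor
          · push_cast; simp only [ha] at hz1; nlinarith
          · push_cast; simp only [ha] at hz2; nlinarith
        simp only [hg, hfz, hfzt]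
    rw [hpiece1, hpiece2]
  calc L f α t = ∫⁻ z in ⋃ i : ℤ, Ioc (a i) (a (i + 1)), g z := by
        rw [hcover, Measure.restrict_univ]; rfl
    _ = ∑' i : ℤ, ∫⁻ z in Ioc (a i) (a (i + 1)), g z :=
        lintegral_iUnion (fun _ => measurableSet_Ioc) hdisj g
    _ = S Δ α p (m + 1) * ENNReal.ofReal u + S Δ α p m * ENNReal.ofReal (Δ - u) := by
        simp only [key]
        rw [ENNReal.tsum_add, ENNReal.tsum_mul_right, ENNReal.tsum_mul_right]
        rfl


lemma f_even (hΔ : 0 < Δ) (hp : ∀ j, 0 < p j)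
    (hf : ∀ (i : ℤ) (z : ℝ), z ∈ Set.Ioo (((i : ℝ) - 1 / 2) * Δ) (((i : ℝ) + 1 / 2) * Δ) →
      f z = p i.natAbs / Δ)
    {z : ℝ} (hz : z ∉ badSet Δ) : f (-z) = f z := by
  obtain ⟨i, hi1, hi2⟩ := mem_bin hΔ hz
  have h1 : f z = p i.natAbs / Δ := hf i z ⟨hi1, hi2⟩
  have h2 : f (-z) = p (-i).natAbs / Δ := by
    apply hf (-i)
    constructor
    · push_cast; linarith
    · push_cast; linarith
  rw [h1, h2, Int.natAbs_neg]

lemma meas_aux (hint : Integrable f) (α t : ℝ) :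
    AEMeasurable (fun z : ℝ => f z ^ α * f (z - t) ^ (1 - α)) volume := by
  have hm : AEMeasurable f (volume : Measure ℝ) := hint.aemeasurable
  have hmt : AEMeasurable (fun z : ℝ => f (z - t)) volume :=
    hm.comp_quasiMeasurePreserving (measurePreserving_sub_right volume t).quasiMeasurePreserving
  have h1 : Measurable (fun x : ℝ => x ^ α) := by measurability
  have h2 : Measurable (fun x : ℝ => x ^ (1 - α)) := by measurability
  exact (h1.comp_aemeasurable hm).mul (h2.comp_aemeasurable hmt)

lemma nonneg_aux (hΔ : 0 < Δ) (hp : ∀ j, 0 < p j)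
    (hf : ∀ (i : ℤ) (z : ℝ), z ∈ Set.Ioo (((i : ℝ) - 1 / 2) * Δ) (((i : ℝ) + 1 / 2) * Δ) →
      f z = p i.natAbs / Δ) (α t : ℝ) :
    0 ≤ᵐ[volume] fun z : ℝ => f z ^ α * f (z - t) ^ (1 - α) := by
  filter_upwards [ae_not_badSet Δ, ae_not_badSet_shift Δ t] with z h1 h2
  have := f_pos hΔ hp hf h1
  have := f_pos hΔ hp hf h2
  positivity

lemma G_eq_toReal_L (hΔ : 0 < Δ) (hp : ∀ j, 0 < p j)
    (hf : ∀ (i : ℤ) (z : ℝ), z ∈ Set.Ioo (((i : ℝ) - 1 / 2) * Δ) (((i : ℝ) + 1 / 2) * Δ) →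
      f z = p i.natAbs / Δ)
    (hint : Integrable f) (t : ℝ) :
    (∫ z : ℝ, f z ^ α * f (z - t) ^ (1 - α)) = (L f α t).toReal :=
  integral_eq_lintegral_of_nonneg_ae (nonneg_aux hΔ hp hf α t)
    (meas_aux hint α t).aestronglyMeasurable

lemma G_zero (hΔ : 0 < Δ) (hp : ∀ j, 0 < p j)
    (hf : ∀ (i : ℤ) (z : ℝ), z ∈ Set.Ioo (((i : ℝ) - 1 / 2) * Δ) (((i : ℝ) + 1 / 2) * Δ) →
      f z = p i.natAbs / Δ)
    (hdens : (∫ z : ℝ, f z) = 1) :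
    (∫ z : ℝ, f z ^ α * f (z - 0) ^ (1 - α)) = 1 := by
  have : (∫ z : ℝ, f z ^ α * f (z - 0) ^ (1 - α)) = ∫ z : ℝ, f z := by
    apply integral_congr_ae
    filter_upwards [ae_not_badSet Δ] with z h1
    have hfz : 0 < f z := f_pos hΔ hp hf h1
    rw [sub_zero, ← Real.rpow_add hfz]
    norm_num
  rw [this, hdens]

lemma L_symm (hΔ : 0 < Δ) (hp : ∀ j, 0 < p j)
    (hf : ∀ (i : ℤ) (z : ℝ), z ∈ Set.Ioo (((i : ℝ) - 1 / 2) * Δ) (((i : ℝ) + 1 / 2) * Δ) →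
      f z = p i.natAbs / Δ)
    (hint : Integrable f) (t : ℝ) : L f α (-t) = L f α t := by
  have hmapneg : Measure.map Neg.neg (volume : Measure ℝ) = volume :=
    Measure.map_neg_eq_self volume
  have hG : AEMeasurable (fun z : ℝ => ENNReal.ofReal (f z ^ α * f (z + t) ^ (1 - α)))
      (Measure.map Neg.neg (volume : Measure ℝ)) := by
    rw [hmapneg]
    have := ENNReal.measurable_ofReal.comp_aemeasurable (meas_aux hint α (-t))
    simpa [sub_neg_eq_add, Function.comp_def] using this
  unfold L
  rw [show (fun z : ℝ => ENNReal.ofReal (f z ^ α * f (z - -t) ^ (1 - α)))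
      = (fun z : ℝ => ENNReal.ofReal (f z ^ α * f (z + t) ^ (1 - α))) by
    funext z; rw [sub_neg_eq_add]]
  have step : ∫⁻ z : ℝ, ENNReal.ofReal (f z ^ α * f (z + t) ^ (1 - α))
      = ∫⁻ z : ℝ, ENNReal.ofReal (f (-z) ^ α * f (-z + t) ^ (1 - α)) := by
    conv_lhs => rw [← hmapneg]
    exact lintegral_map' hG measurable_neg.aemeasurable
  rw [step]
  apply lintegral_congr_ae
  filter_upwards [ae_not_badSet Δ, ae_not_badSet_shift Δ t] with z h1 h2
  have e1 : f (-z) = f z := f_even hΔ hp hf h1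
  have e2 : f (-z + t) = f (z - t) := by
    rw [show -z + t = -(z - t) by ring]
    exact f_even hΔ hp hf h2
  rw [e1, e2]


lemma one_le_L (hΔ : 0 < Δ) (hα : 1 < α) (hp : ∀ j, 0 < p j)
    (hf : ∀ (i : ℤ) (z : ℝ), z ∈ Set.Ioo (((i : ℝ) - 1 / 2) * Δ) (((i : ℝ) + 1 / 2) * Δ) →
      f z = p i.natAbs / Δ)
    (hint : Integrable f) (hdens : (∫ z : ℝ, f z) = 1) (t : ℝ) :
    1 ≤ L f α t := by
  have hα0 : (0:ℝ) < α := lt_trans zero_lt_one hα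
  have hα1 : (0:ℝ) < α - 1 := by linarith
  set F : ℝ → ℝ≥0∞ := fun z => ENNReal.ofReal (f z) with hF
  set Ft : ℝ → ℝ≥0∞ := fun z => ENNReal.ofReal (f (z - t)) with hFt
  have hmF : AEMeasurable F volume := ENNReal.measurable_ofReal.comp_aemeasurable hint.aemeasurable
  have hmt : AEMeasurable (fun z : ℝ => f (z - t)) volume :=
    hint.aemeasurable.comp_quasiMeasurePreserving
      (measurePreserving_sub_right volume t).quasiMeasurePreserving
  have hmFt : AEMeasurable Ft volume := ENNReal.measurable_ofReal.comp_aemeasurable hmt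
  have hnn : 0 ≤ᵐ[volume] f := (ae_not_badSet Δ).mono fun z hz => (f_pos hΔ hp hf hz).le
  have hFint : ∫⁻ z, F z = 1 := by
    rw [← ofReal_integral_eq_lintegral_ofReal hint hnn, hdens, ENNReal.ofReal_one]
  have hFtint : ∫⁻ z, Ft z = 1 := by
    have h := lintegral_add_right_eq_self (μ := (volume : Measure ℝ)) (fun z : ℝ => ENNReal.ofReal (f z)) (-t)
    simp only [← sub_eq_add_neg] at h
    rw [hFt]
    exact h.trans hFint
  set q : ℝ := α / (α - 1) with hqdef
  have hq : α.HolderConjugate q := Real.HolderConjugate.conjExponent hα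
  set U : ℝ → ℝ≥0∞ := fun z => F z * Ft z ^ ((1 - α) / α) with hU
  set V : ℝ → ℝ≥0∞ := fun z => Ft z ^ ((α - 1) / α) with hV
  have hmU : AEMeasurable U volume := hmF.mul (hmFt.pow_const _)
  have hmV : AEMeasurable V volume := hmFt.pow_const _
  have hUV : ∀ᵐ z : ℝ, U z * V z = F z := by
    filter_upwards [ae_not_badSet_shift Δ t] with z hz
    have hpos : 0 < f (z - t) := f_pos hΔ hp hf hz
    have h0 : Ft z ≠ 0 := by
      simp only [hFt]; exact (ENNReal.ofReal_pos.2 hpos).ne'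
    have htop : Ft z ≠ ⊤ := ENNReal.ofReal_ne_top
    simp only [hU, hV]
    rw [mul_assoc, ← ENNReal.rpow_add _ _ h0 htop]
    have : (1 - α) / α + (α - 1) / α = 0 := by field_simp; ring
    rw [this, ENNReal.rpow_zero, mul_one]
  have hUpow : ∀ᵐ z : ℝ, U z ^ α = ENNReal.ofReal (f z ^ α * f (z - t) ^ (1 - α)) := by
    filter_upwards [ae_not_badSet Δ, ae_not_badSet_shift Δ t] with z h1 h2
    have p1 : 0 < f z := f_pos hΔ hp hf h1
    have p2 : 0 < f (z - t) := f_pos hΔ hp hf h2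
    simp only [hU]
    rw [ENNReal.mul_rpow_of_nonneg _ _ hα0.le, ← ENNReal.rpow_mul]
    have : (1 - α) / α * α = 1 - α := by field_simp
    rw [this, ENNReal.ofReal_mul (Real.rpow_nonneg p1.le α),
      ENNReal.ofReal_rpow_of_pos p1, ENNReal.ofReal_rpow_of_pos p2]
  have hVpow : ∀ z : ℝ, V z ^ q = Ft z := by
    intro z
    simp only [hV]
    rw [← ENNReal.rpow_mul]
    have : (α - 1) / α * q = 1 := by rw [hqdef]; field_simp
    rw [this, ENNReal.rpow_one]
  have holder := ENNReal.lintegral_mul_le_Lp_mul_Lq volume hq hmU hmV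
  have h1 : ∫⁻ z : ℝ, (U * V) z = 1 := by
    have : ∫⁻ z : ℝ, (U * V) z = ∫⁻ z : ℝ, F z :=
      lintegral_congr_ae (hUV.mono fun z hz => hz)
    rw [this, hFint]
  have h2 : ∫⁻ z : ℝ, U z ^ α = L f α t := lintegral_congr_ae hUpow
  have h3 : ∫⁻ z : ℝ, V z ^ q = 1 := by simp_rw [hVpow]; exact hFtint
  rw [h1, h2, h3, ENNReal.one_rpow, mul_one] at holder
  by_contra hlt
  push_neg at hlt
  exact absurd holder (not_le.2 (ENNReal.rpow_lt_one hlt (by positivity)))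


lemma L_grid (hΔ : 0 < Δ)
    (hf : ∀ (i : ℤ) (z : ℝ), z ∈ Set.Ioo (((i : ℝ) - 1 / 2) * Δ) (((i : ℝ) + 1 / 2) * Δ) →
      f z = p i.natAbs / Δ)
    (m : ℤ) : L f α ((m : ℝ) * Δ) = S Δ α p m * ENNReal.ofReal Δ := by
  have := shift_lintegral (α := α) hΔ hf m (le_refl 0) hΔ.le
  simpa using this

lemma mul_ne_top_left {x a : ℝ≥0∞} (h : x * a ≠ ⊤) (ha : a ≠ 0) : x ≠ ⊤ := by
  intro hx
  exact h (by rw [hx, ENNReal.top_mul ha])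

end AuxWCS
end AuxWCS


open MeasureTheory

/-- For a symmetric piecewise-constant density with bins of width `Δ` and sensitivity
`s = kΔ` a positive integer multiple of `Δ`, the worst-case Rényi divergence over shifts
`t ∈ [-s,s]` is attained at some positive integer multiple of `Δ` in `{Δ, 2Δ, …, s}`. -/
theorem worst_case_shift_on_grid (Δ α s : ℝ) (hΔ : 0 < Δ) (hα : 1 < α)
    (k : ℕ) (hk : 1 ≤ k) (hs : s = (k : ℝ) * Δ)
    (p : ℕ → ℝ) (hp : ∀ j, 0 < p j)
    (f : ℝ → ℝ)
    (hf : ∀ (i : ℤ) (z : ℝ), z ∈ Set.Ioo (((i : ℝ) - 1 / 2) * Δ) (((i : ℝ) + 1 / 2) * Δ) →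
      f z = p i.natAbs / Δ)
    (hint : Integrable f) (hdens : (∫ z : ℝ, f z) = 1)
    (D : ℝ → ℝ)
    (hD : ∀ t, D t = (α - 1)⁻¹ * Real.log (∫ z : ℝ, f z ^ α * f (z - t) ^ (1 - α))) :
    ∃ j ∈ Finset.Icc 1 k, ∀ t ∈ Set.Icc (-s) s, D t ≤ D ((j : ℝ) * Δ) := by
  classical
  have hα1 : (0:ℝ) < α - 1 := by linarith
  have hc0 : (0:ℝ) ≤ (α - 1)⁻¹ := inv_nonneg.2 hα1.le
  have hDL : ∀ t, D t = (α - 1)⁻¹ * Real.log ((AuxWCS.L f α t).toReal) := by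
    intro t; rw [hD t, AuxWCS.G_eq_toReal_L hΔ hp hf hint t]
  have hLone : ∀ t, 1 ≤ AuxWCS.L f α t := fun t => AuxWCS.one_le_L hΔ hα hp hf hint hdens t
  have hD0 : ∀ t, 0 ≤ D t := by
    intro t
    rw [hDL t]
    rcases eq_or_ne (AuxWCS.L f α t) ⊤ with h | h
    · simp [h]
    · refine mul_nonneg hc0 (Real.log_nonneg ?_)
      have := ENNReal.toReal_mono h (hLone t)
      simpa using this
  have hDzero : D 0 = 0 := by
    rw [hD 0, AuxWCS.G_zero hΔ hp hf hdens, Real.log_one, mul_zero]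
  obtain ⟨j₀, hj₀mem, hj₀max⟩ := Finset.exists_max_image (Finset.Icc 1 k)
    (fun j => D ((j : ℝ) * Δ)) ⟨1, Finset.mem_Icc.2 ⟨le_refl 1, hk⟩⟩
  refine ⟨j₀, hj₀mem, ?_⟩
  have hgrid : ∀ g : ℕ, g ≤ k → D ((g : ℝ) * Δ) ≤ D ((j₀ : ℝ) * Δ) := by
    intro g hg
    rcases Nat.eq_zero_or_pos g with rfl | hgpos
    · simp only [Nat.cast_zero, zero_mul]
      rw [hDzero]; exact hD0 _
    · exact hj₀max g (Finset.mem_Icc.2 ⟨hgpos, hg⟩)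
  have hDle : ∀ t₁ t₂ : ℝ, AuxWCS.L f α t₁ ≤ AuxWCS.L f α t₂ → AuxWCS.L f α t₂ ≠ ⊤ → D t₁ ≤ D t₂ := by
    intro t₁ t₂ hle htop
    rw [hDL, hDL]
    refine mul_le_mul_of_nonneg_left ?_ hc0
    refine Real.log_le_log ?_ (ENNReal.toReal_mono htop hle)
    have hne : AuxWCS.L f α t₁ ≠ ⊤ := ne_top_of_le_ne_top htop hle
    have := ENNReal.toReal_mono hne (hLone t₁)
    simp at this; linarith
  have main : ∀ t, 0 ≤ t → t ≤ s → D t ≤ D ((j₀ : ℝ) * Δ) := by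
    intro t ht0 hts
    set mi : ℕ := min (⌊t / Δ⌋).toNat (k - 1) with hmi
    have hfl0 : (0:ℤ) ≤ ⌊t / Δ⌋ := Int.floor_nonneg.2 (div_nonneg ht0 hΔ.le)
    have hcastfl : ((⌊t / Δ⌋.toNat : ℕ) : ℝ) = ((⌊t / Δ⌋ : ℤ) : ℝ) := by
      exact_mod_cast congrArg Int.cast (Int.toNat_of_nonneg hfl0)
    have hmi_le : (mi : ℝ) ≤ t / Δ := by
      have h2 : ((mi : ℕ) : ℝ) ≤ ((⌊t / Δ⌋.toNat : ℕ) : ℝ) := Nat.cast_le.2 (min_le_left _ _)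
      rw [hcastfl] at h2
      exact le_trans h2 (Int.floor_le _)
    have hu0 : (mi : ℝ) * Δ ≤ t := by
      have := mul_le_mul_of_nonneg_right hmi_le hΔ.le
      rwa [div_mul_cancel₀ t hΔ.ne'] at this
    have hu1 : t ≤ ((mi : ℝ) + 1) * Δ := by
      rcases le_or_gt (⌊t / Δ⌋).toNat (k - 1) with hcc | hcc
      · have hmi_eq : mi = ⌊t / Δ⌋.toNat := min_eq_left hcc
        have h1 : t / Δ < (⌊t / Δ⌋ : ℝ) + 1 := Int.lt_floor_add_one _
        have h2 : t < (((⌊t / Δ⌋ : ℤ) : ℝ) + 1) * Δ := by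
          have := mul_lt_mul_of_pos_right h1 hΔ
          rwa [div_mul_cancel₀ t hΔ.ne'] at this
        rw [hmi_eq, hcastfl]
        exact h2.le
      · have hmi_eq : mi = k - 1 := min_eq_right hcc.le
        have hcast : ((mi : ℝ) + 1) = (k : ℝ) := by
          rw [hmi_eq]
          have h3 : (k - 1 : ℕ) + 1 = k := Nat.succ_pred_eq_of_pos hk
          exact_mod_cast congrArg (Nat.cast (R := ℝ)) h3
        rw [hcast]
        rw [hs] at hts
        exact hts
    have hmk : mi + 1 ≤ k := by
      have := min_le_right (⌊t / Δ⌋).toNat (k - 1); omega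
    set u : ℝ := t - (mi : ℝ) * Δ with hudef
    have hu0' : 0 ≤ u := sub_nonneg.2 hu0
    have hexp : ((mi : ℝ) + 1) * Δ = (mi : ℝ) * Δ + Δ := by ring
    have huΔ : u ≤ Δ := by rw [hexp] at hu1; rw [hudef]; linarith
    have hLt : AuxWCS.L f α t = AuxWCS.S Δ α p ((mi : ℤ) + 1) * ENNReal.ofReal u
        + AuxWCS.S Δ α p (mi : ℤ) * ENNReal.ofReal (Δ - u) := by
      have h := AuxWCS.shift_lintegral (α := α) hΔ hf (mi : ℤ) hu0' huΔ
      have harg : (((mi : ℤ)) : ℝ) * Δ + u = t := by push_cast; rw [hudef]; ring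
      rwa [harg] at h
    have hLm : AuxWCS.L f α ((mi : ℝ) * Δ) = AuxWCS.S Δ α p (mi : ℤ) * ENNReal.ofReal Δ := by
      have h := AuxWCS.L_grid (α := α) (p := p) hΔ hf (mi : ℤ)
      rwa [show (((mi : ℤ)) : ℝ) = (mi : ℝ) by push_cast; ring] at h
    have hLm1 : AuxWCS.L f α (((mi : ℝ) + 1) * Δ) = AuxWCS.S Δ α p ((mi : ℤ) + 1) * ENNReal.ofReal Δ := by
      have h := AuxWCS.L_grid (α := α) (p := p) hΔ hf ((mi : ℤ) + 1)
      rwa [show (((mi : ℤ) + 1 : ℤ) : ℝ) = (mi : ℝ) + 1 by push_cast; ring] at h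
    have hofD : ENNReal.ofReal u + ENNReal.ofReal (Δ - u) = ENNReal.ofReal Δ := by
      rw [← ENNReal.ofReal_add hu0' (by linarith)]
      congr 1; ring
    rcases eq_or_ne (AuxWCS.L f α t) ⊤ with htop | htop
    · rw [hDL t, htop]
      simp only [ENNReal.toReal_top, Real.log_zero, mul_zero]
      exact hD0 _
    rcases eq_or_lt_of_le hu0' with hueq | hupos
    · have ht_eq : t = (mi : ℝ) * Δ := by
        have : u = 0 := hueq.symm
        rw [hudef] at this; linarith
      rw [ht_eq]
      exact hgrid mi (le_trans (Nat.le_succ mi) hmk)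
    rcases eq_or_lt_of_le huΔ with hueq | hult
    · have ht_eq : t = ((mi : ℝ) + 1) * Δ := by rw [hexp, hudef] at *; linarith
      rw [ht_eq, show ((mi : ℝ) + 1) = ((mi + 1 : ℕ) : ℝ) by push_cast; ring]
      exact hgrid (mi + 1) hmk
    have hau : ENNReal.ofReal u ≠ 0 := by
      simp only [ne_eq, ENNReal.ofReal_eq_zero, not_le]; exact hupos
    have hbu : ENNReal.ofReal (Δ - u) ≠ 0 := by
      simp only [ne_eq, ENNReal.ofReal_eq_zero, not_le]; linarith
    rcases le_total (AuxWCS.S Δ α p (mi : ℤ)) (AuxWCS.S Δ α p ((mi : ℤ) + 1)) with hS | hS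
    · -- compare with right endpoint
      have hfin : AuxWCS.L f α (((mi : ℝ) + 1) * Δ) ≠ ⊤ := by
        rw [hLm1]
        have h1 : AuxWCS.S Δ α p ((mi : ℤ) + 1) * ENNReal.ofReal u ≠ ⊤ := by
          intro hcontr
          apply htop
          rw [hLt]
          exact ENNReal.add_eq_top.2 (Or.inl hcontr)
        have h2 : AuxWCS.S Δ α p ((mi : ℤ) + 1) ≠ ⊤ := AuxWCS.mul_ne_top_left h1 hau
        exact ENNReal.mul_ne_top h2 ENNReal.ofReal_ne_top
      have hle : AuxWCS.L f α t ≤ AuxWCS.L f α (((mi : ℝ) + 1) * Δ) := by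
        rw [hLt, hLm1, ← hofD, mul_add]
        exact add_le_add le_rfl (mul_le_mul_left hS _)
      exact le_trans (hDle t _ hle hfin)
        (by rw [show ((mi : ℝ) + 1) = ((mi + 1 : ℕ) : ℝ) by push_cast; ring]
            exact hgrid (mi + 1) hmk)
    · -- compare with left endpoint
      have hfin : AuxWCS.L f α ((mi : ℝ) * Δ) ≠ ⊤ := by
        rw [hLm]
        have h1 : AuxWCS.S Δ α p (mi : ℤ) * ENNReal.ofReal (Δ - u) ≠ ⊤ := by
          intro hcontr
          apply htop
          rw [hLt]
          exact ENNReal.add_eq_top.2 (Or.inr hcontr)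
        have h2 : AuxWCS.S Δ α p (mi : ℤ) ≠ ⊤ := AuxWCS.mul_ne_top_left h1 hbu
        exact ENNReal.mul_ne_top h2 ENNReal.ofReal_ne_top
      have hle : AuxWCS.L f α t ≤ AuxWCS.L f α ((mi : ℝ) * Δ) := by
        rw [hLt, hLm, ← hofD, mul_add]
        exact add_le_add (mul_le_mul_left hS _) le_rfl
      exact le_trans (hDle t _ hle hfin) (hgrid mi (le_trans (Nat.le_succ mi) hmk))
  intro t ht
  rcases le_total 0 t with h | h
  · exact main t h ht.2
  · have hsym : D t = D (-t) := by
      rw [hDL t, hDL (-t), AuxWCS.L_symm hΔ hp hf hint t]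
    rw [hsym]
    exact main (-t) (by linarith) (by have := ht.1; linarith)
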